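/- Existence and uniqueness for the SVF denoising problem: for f ∈ L²(Ω), the problem min over (u,v) ∈ L²(Ω) × M(Ω)^d of (λ/2)‖u − f‖₂² + ‖v‖_{M(Ω)} subject to the weak constraint Δu = ∇·v (no-flux boundary conditions) admits a minimizer, and the u-component of the minimizer is unique. -/

import Mathlib

open MeasureTheory Filter
open scoped ENNReal RealInnerProductSpace

abbrev Euc (d : ℕ) := EuclideanSpace ℝ (Fin d)

noncomputable def lapl (d : ℕ) (φ : Euc d → ℝ) (x : Euc d) : ℝ :=
  ∑ i : Fin d, iteratedFDeriv ℝ 2 φ x ![EuclideanSpace.single i 1, EuclideanSpace.single i 1]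

noncomputable def diverg (d : ℕ) (g : Euc d → Euc d) (x : Euc d) : ℝ :=
  ∑ i : Fin d, fderiv ℝ g x (EuclideanSpace.single i 1) i

structure VRadon (d : ℕ) (Ω : Set (Euc d)) where
  pair : (Euc d → Euc d) → ℝ
  pair_add : ∀ f g, pair (f + g) = pair f + pair g
  pair_smul : ∀ (c : ℝ) f, pair (c • f) = c * pair f
  bdd : BddAbove {r | ∃ φ : Euc d → Euc d, Continuous φ ∧ (∀ x ∈ Ω, ‖φ x‖ ≤ 1) ∧ r = pair φ}

noncomputable def VRadon.tvNorm {d : ℕ} {Ω : Set (Euc d)} (v : VRadon d Ω) : ℝ :=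
  sSup {r | ∃ φ : Euc d → Euc d, Continuous φ ∧ (∀ x ∈ Ω, ‖φ x‖ ≤ 1) ∧ r = v.pair φ}

def Admissible (d : ℕ) (Ω : Set (Euc d)) (ν : Euc d → Euc d) (u : Euc d → ℝ)
    (v : VRadon d Ω) : Prop :=
  ∀ φ : Euc d → ℝ, ContDiff ℝ 2 φ → (∀ x ∈ frontier Ω, ⟪gradient φ x, ν x⟫ = 0) →
    (∫ x in Ω, lapl d φ x * u x) + v.pair (fun x => gradient φ x) = 0

noncomputable def SVF (d : ℕ) (Ω : Set (Euc d)) (ν : Euc d → Euc d) (u : Euc d → ℝ) : ℝ≥0∞ :=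
  ⨅ (v : VRadon d Ω) (_ : Admissible d Ω ν u v), ENNReal.ofReal v.tvNorm

def TVset (d : ℕ) (Ω : Set (Euc d)) (u : Euc d → ℝ) : Set ℝ :=
  {r | ∃ g : Euc d → Euc d, ContDiff ℝ 1 g ∧ HasCompactSupport g ∧ tsupport g ⊆ Ω ∧
    (∀ x, ‖g x‖ ≤ 1) ∧ r = ∫ x in Ω, u x * diverg d g x}

noncomputable def TVsup (d : ℕ) (Ω : Set (Euc d)) (u : Euc d → ℝ) : ℝ := sSup (TVset d Ω u)


section Helpers
variable {d : ℕ} {Ω : Set (Euc d)}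

theorem VRadon.pair_zero (v : VRadon d Ω) : v.pair 0 = 0 := by
  have := v.pair_smul 0 0
  simpa using this

theorem VRadon.pair_le_tv (v : VRadon d Ω) {φ : Euc d → Euc d} (hc : Continuous φ)
    (hb : ∀ x ∈ Ω, ‖φ x‖ ≤ 1) : v.pair φ ≤ v.tvNorm :=
  le_csSup v.bdd ⟨φ, hc, hb, rfl⟩

theorem VRadon.tvNorm_nonneg (v : VRadon d Ω) : 0 ≤ v.tvNorm := by
  have h := v.pair_le_tv (φ := 0) continuous_const (by simp)
  rwa [v.pair_zero] at h

theorem VRadon.pair_le (v : VRadon d Ω) {φ : Euc d → Euc d} (hc : Continuous φ) {s : ℝ}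
    (hs : 0 ≤ s) (hb : ∀ x ∈ Ω, ‖φ x‖ ≤ s) : v.pair φ ≤ v.tvNorm * s := by
  have key : ∀ ε : ℝ, 0 < ε → v.pair φ ≤ v.tvNorm * (s + ε) := by
    intro ε hε
    have hsε : 0 < s + ε := by linarith
    have h1 : v.pair ((s + ε)⁻¹ • φ) ≤ v.tvNorm := by
      refine v.pair_le_tv (hc.const_smul ((s+ε)⁻¹ : ℝ)) fun x hx => ?_
      have : ‖((s + ε)⁻¹ • φ) x‖ = (s + ε)⁻¹ * ‖φ x‖ := by
        simp only [Pi.smul_apply, norm_smul, Real.norm_eq_abs,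
          abs_of_nonneg (inv_nonneg.2 hsε.le)]
      rw [this]
      calc (s + ε)⁻¹ * ‖φ x‖ ≤ (s + ε)⁻¹ * (s + ε) := by
            apply mul_le_mul_of_nonneg_left _ (inv_nonneg.2 hsε.le)
            exact (hb x hx).trans (by linarith)
        _ = 1 := inv_mul_cancel₀ hsε.ne'
    rw [v.pair_smul] at h1
    calc v.pair φ = (s + ε) * ((s + ε)⁻¹ * v.pair φ) := by field_simp
      _ ≤ (s + ε) * v.tvNorm := mul_le_mul_of_nonneg_left h1 hsε.le
      _ = v.tvNorm * (s + ε) := mul_comm _ _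
  refine le_of_forall_pos_le_add fun δ hδ => ?_
  rcases eq_or_lt_of_le v.tvNorm_nonneg with h0 | h0
  · have h1 := key 1 one_pos
    rw [← h0] at h1 ⊢
    simpa using h1.trans (by linarith [hδ.le])
  · have := key (δ / v.tvNorm) (div_pos hδ h0)
    calc v.pair φ ≤ v.tvNorm * (s + δ / v.tvNorm) := this
      _ = v.tvNorm * s + δ := by field_simp

end Helpers
section Helpers2
variable {d : ℕ}

theorem gradient_eq_zero_iff {φ : Euc d → ℝ} {x : Euc d} :
    gradient φ x = 0 ↔ fderiv ℝ φ x = 0 := by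
  unfold gradient
  rw [map_eq_zero_iff _ (LinearIsometryEquiv.injective _)]

theorem grad_add {φ ψ : Euc d → ℝ} {x : Euc d} (hφ : DifferentiableAt ℝ φ x)
    (hψ : DifferentiableAt ℝ ψ x) :
    gradient (φ + ψ) x = gradient φ x + gradient ψ x := by
  unfold gradient
  rw [fderiv_add hφ hψ, map_add]

theorem grad_smul (c : ℝ) {φ : Euc d → ℝ} {x : Euc d} (hφ : DifferentiableAt ℝ φ x) :
    gradient (c • φ) x = c • gradient φ x := by
  unfold gradient
  rw [fderiv_const_smul hφ c, _root_.map_smul]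

theorem lapl_add {φ ψ : Euc d → ℝ} (hφ : ContDiff ℝ 2 φ) (hψ : ContDiff ℝ 2 ψ) (x : Euc d) :
    lapl d (φ + ψ) x = lapl d φ x + lapl d ψ x := by
  unfold lapl
  rw [← Finset.sum_add_distrib]
  refine Finset.sum_congr rfl fun i _ => ?_
  rw [iteratedFDeriv_add_apply hφ.contDiffAt hψ.contDiffAt]
  rfl

theorem lapl_smul (c : ℝ) {φ : Euc d → ℝ} (hφ : ContDiff ℝ 2 φ) (x : Euc d) :
    lapl d (c • φ) x = c * lapl d φ x := by
  unfold lapl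
  rw [Finset.mul_sum]
  refine Finset.sum_congr rfl fun i _ => ?_
  rw [iteratedFDeriv_const_smul_apply hφ.contDiffAt]
  rfl

theorem lapl_eq_zero {φ : Euc d → ℝ} (h : ∀ y, fderiv ℝ φ y = 0) (x : Euc d) :
    lapl d φ x = 0 := by
  unfold lapl
  refine Finset.sum_eq_zero fun i _ => ?_
  rw [iteratedFDeriv_two_apply]
  have : fderiv ℝ φ = fun _ : Euc d => (0 : Euc d →L[ℝ] ℝ) := funext h
  rw [this, fderiv_const_apply]
  simp

theorem cont_grad {φ : Euc d → ℝ} (hφ : ContDiff ℝ 2 φ) :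
    Continuous fun x => gradient φ x := by
  have h1 : Continuous fun x => fderiv ℝ φ x := hφ.continuous_fderiv (by norm_num)
  exact (InnerProductSpace.toDual ℝ (Euc d)).symm.continuous.comp h1

theorem cont_lapl {φ : Euc d → ℝ} (hφ : ContDiff ℝ 2 φ) : Continuous (lapl d φ) := by
  unfold lapl
  refine continuous_finset_sum _ fun i _ => ?_
  have h1 : Continuous fun x => iteratedFDeriv ℝ 2 φ x := hφ.continuous_iteratedFDeriv (by norm_num)
  exact (continuous_eval_const _).comp h1

theorem bounded_on_closure {Ω : Set (Euc d)} (hΩb : Bornology.IsBounded Ω)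
    {E : Type*} [NormedAddCommGroup E] {g : Euc d → E} (hg : Continuous g) :
    ∃ C, 0 ≤ C ∧ ∀ x ∈ Ω, ‖g x‖ ≤ C := by
  obtain ⟨C, hC⟩ := hΩb.isCompact_closure.exists_bound_of_continuousOn hg.continuousOn
  exact ⟨max C 0, le_max_right _ _,
    fun x hx => (hC x (subset_closure hx)).trans (le_max_left _ _)⟩

end Helpers2
section Helpers3
variable {α : Type*} [MeasurableSpace α] {μ : Measure α} {w u g : α → ℝ}

theorem integrable_mul_L2 (hw : MemLp w 2 μ) (hu : MemLp u 2 μ) :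
    Integrable (fun x => w x * u x) μ := by
  have h := L2.integrable_inner (𝕜 := ℝ) (hw.toLp w) (hu.toLp u)
  refine h.congr ?_
  filter_upwards [hw.coeFn_toLp, hu.coeFn_toLp] with x h1 h2
  rw [h1, h2]
  simp [RCLike.inner_apply, mul_comm]

theorem integral_mul_eq_inner (hw : MemLp w 2 μ) (hu : MemLp u 2 μ) :
    ∫ x, w x * u x ∂μ = ⟪hw.toLp w, hu.toLp u⟫ := by
  rw [L2.inner_def]
  refine integral_congr_ae ?_
  filter_upwards [hw.coeFn_toLp, hu.coeFn_toLp] with x h1 h2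
  rw [h1, h2]
  simp [RCLike.inner_apply, mul_comm]

theorem integral_sub_sq_eq (hu : MemLp u 2 μ) (hg : MemLp g 2 μ) :
    ∫ x, (u x - g x)^2 ∂μ = ‖hu.toLp u - hg.toLp g‖^2 := by
  have hsub : MemLp (u - g) 2 μ := hu.sub hg
  have h1 : hu.toLp u - hg.toLp g = hsub.toLp (u - g) := (MemLp.toLp_sub hu hg).symm
  rw [h1, ← real_inner_self_eq_norm_sq, ← integral_mul_eq_inner hsub hsub]
  refine integral_congr_ae (Eventually.of_forall fun x => ?_)
  simp [Pi.sub_apply]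
  ring

theorem midpoint_norm_sq {E : Type*} [NormedAddCommGroup E] [InnerProductSpace ℝ E] (a b : E) :
    ‖(2⁻¹:ℝ) • a + (2⁻¹:ℝ) • b‖^2 = (‖a‖^2 + ‖b‖^2)/2 - ‖a - b‖^2/4 := by
  have hp := parallelogram_law_with_norm ℝ a b
  have h1 : (2⁻¹:ℝ) • a + (2⁻¹:ℝ) • b = (2⁻¹:ℝ) • (a + b) := by rw [smul_add]
  have h2 : ‖(2⁻¹:ℝ) • (a + b)‖ = 2⁻¹ * ‖a + b‖ := by
    rw [norm_smul]; simp
  rw [h1, h2]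
  nlinarith [hp]

end Helpers3
section Helpers4
variable {d : ℕ}

noncomputable def SOm (Ω : Set (Euc d)) (g : Euc d → Euc d) : ℝ :=
  sSup ((fun x => ‖g x‖) '' Ω)

theorem SOm_nonneg (Ω : Set (Euc d)) (g : Euc d → Euc d) : 0 ≤ SOm Ω g :=
  Real.sSup_nonneg (by rintro r ⟨x, _, rfl⟩; exact norm_nonneg _)

theorem SOm_bddAbove {Ω : Set (Euc d)} {g : Euc d → Euc d} {C : ℝ}
    (h : ∀ x ∈ Ω, ‖g x‖ ≤ C) : BddAbove ((fun x => ‖g x‖) '' Ω) :=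
  ⟨C, by rintro r ⟨x, hx, rfl⟩; exact h x hx⟩

theorem le_SOm {Ω : Set (Euc d)} {g : Euc d → Euc d} {C : ℝ}
    (h : ∀ x ∈ Ω, ‖g x‖ ≤ C) {x : Euc d} (hx : x ∈ Ω) : ‖g x‖ ≤ SOm Ω g :=
  le_csSup (SOm_bddAbove h) ⟨x, hx, rfl⟩

theorem SOm_le {Ω : Set (Euc d)} {g : Euc d → Euc d} {C : ℝ}
    (h : ∀ x ∈ Ω, ‖g x‖ ≤ C) (hC : 0 ≤ C) : SOm Ω g ≤ C :=
  Real.sSup_le (by rintro r ⟨x, hx, rfl⟩; exact h x hx) hC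

def Bsub (d : ℕ) (Ω : Set (Euc d)) : Submodule ℝ (Euc d → Euc d) where
  carrier := {g | ∃ C, ∀ x ∈ Ω, ‖g x‖ ≤ C}
  add_mem' := by
    rintro a b ⟨C, hC⟩ ⟨D, hD⟩
    exact ⟨C + D, fun x hx => (norm_add_le _ _).trans (add_le_add (hC x hx) (hD x hx))⟩
  zero_mem' := ⟨0, by simp⟩
  smul_mem' := by
    rintro c g ⟨C, hC⟩
    refine ⟨|c| * C, fun x hx => ?_⟩
    rw [Pi.smul_apply, norm_smul, Real.norm_eq_abs]
    exact mul_le_mul_of_nonneg_left (hC x hx) (abs_nonneg _)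

theorem SOm_add {Ω : Set (Euc d)} {a b : Euc d → Euc d}
    (ha : a ∈ Bsub d Ω) (hb : b ∈ Bsub d Ω) : SOm Ω (a + b) ≤ SOm Ω a + SOm Ω b := by
  obtain ⟨C, hC⟩ := ha; obtain ⟨D, hD⟩ := hb
  refine Real.sSup_le ?_ (add_nonneg (SOm_nonneg Ω a) (SOm_nonneg Ω b))
  rintro r ⟨x, hx, rfl⟩
  exact (norm_add_le _ _).trans (add_le_add (le_SOm hC hx) (le_SOm hD hx))

theorem SOm_smul {Ω : Set (Euc d)} {c : ℝ} (hc : 0 < c) {g : Euc d → Euc d}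
    (hg : g ∈ Bsub d Ω) : SOm Ω (c • g) = c * SOm Ω g := by
  obtain ⟨C, hC⟩ := hg
  have hcg : ∀ x ∈ Ω, ‖(c • g) x‖ = c * ‖g x‖ := fun x _ => by
    rw [Pi.smul_apply, norm_smul, Real.norm_eq_abs, abs_of_pos hc]
  refine le_antisymm ?_ ?_
  · refine Real.sSup_le ?_ (mul_nonneg hc.le (SOm_nonneg Ω g))
    rintro r ⟨x, hx, rfl⟩
    simp only []
    rw [hcg x hx]
    exact mul_le_mul_of_nonneg_left (le_SOm hC hx) hc.le
  · rw [← le_div_iff₀' hc]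
    refine Real.sSup_le ?_ (div_nonneg (SOm_nonneg Ω _) hc.le)
    rintro r ⟨x, hx, rfl⟩
    simp only []
    rw [le_div_iff₀' hc, ← hcg x hx]
    refine le_SOm (C := c * C) (fun y hy => ?_) hx
    rw [hcg y hy]
    exact mul_le_mul_of_nonneg_left (hC y hy) hc.le

def Tsub (d : ℕ) (Ω : Set (Euc d)) (ν : Euc d → Euc d) : Submodule ℝ (Euc d → ℝ) where
  carrier := {φ | ContDiff ℝ 2 φ ∧ ∀ x ∈ frontier Ω, ⟪gradient φ x, ν x⟫ = 0}
  add_mem' := by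
    rintro a b ⟨ha1, ha2⟩ ⟨hb1, hb2⟩
    refine ⟨ha1.add hb1, fun x hx => ?_⟩
    rw [grad_add (ha1.differentiable two_ne_zero).differentiableAt
      (hb1.differentiable two_ne_zero).differentiableAt, inner_add_left, ha2 x hx, hb2 x hx,
      add_zero]
  zero_mem' := by
    refine ⟨contDiff_const, fun x hx => ?_⟩
    have : gradient (0 : Euc d → ℝ) x = 0 := by
      rw [gradient_eq_zero_iff]
      exact fderiv_const_apply 0
    rw [this, inner_zero_left]
  smul_mem' := by
    rintro c φ ⟨h1, h2⟩
    refine ⟨h1.const_smul c, fun x hx => ?_⟩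
    rw [grad_smul c (h1.differentiable two_ne_zero).differentiableAt, real_inner_smul_left,
      h2 x hx, mul_zero]

end Helpers4

set_option maxHeartbeats 2000000 in
/-- existence and uniqueness for the SVF denoising problem: for
`f ∈ L²(Ω)`, the problem `min (λ/2)‖u-f‖₂² + ‖v‖_M` over `L²`-functions `u` and
vector measures `v` subject to the weak constraint `Δu = ∇·v` (no-flux boundary
conditions) admits a minimizer (given feasibility), and the `u`-component of
any minimizer is unique (a.e. on `Ω`). -/
theorem svf_denoising_existence_uniqueness (d : ℕ) (Ω : Set (Euc d))
    (ν : Euc d → Euc d) (hΩo : IsOpen Ω) (hΩb : Bornology.IsBounded Ω)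
    (f : Euc d → ℝ) (hf : MemLp f 2 (volume.restrict Ω))
    (lam : ℝ) (hlam : 0 < lam)
    (hfeas : ∃ (u : Euc d → ℝ) (v : VRadon d Ω),
      MemLp u 2 (volume.restrict Ω) ∧ Admissible d Ω ν u v) :
    ∃ (u : Euc d → ℝ) (v : VRadon d Ω),
      MemLp u 2 (volume.restrict Ω) ∧ Admissible d Ω ν u v ∧
      (∀ (u' : Euc d → ℝ) (v' : VRadon d Ω),
        MemLp u' 2 (volume.restrict Ω) → Admissible d Ω ν u' v' →
        lam / 2 * (∫ x in Ω, (u x - f x) ^ 2) + v.tvNorm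
          ≤ lam / 2 * (∫ x in Ω, (u' x - f x) ^ 2) + v'.tvNorm) ∧
      (∀ (u' : Euc d → ℝ) (v' : VRadon d Ω),
        MemLp u' 2 (volume.restrict Ω) → Admissible d Ω ν u' v' →
        (∀ (u'' : Euc d → ℝ) (v'' : VRadon d Ω),
          MemLp u'' 2 (volume.restrict Ω) → Admissible d Ω ν u'' v'' →
          lam / 2 * (∫ x in Ω, (u' x - f x) ^ 2) + v'.tvNorm
            ≤ lam / 2 * (∫ x in Ω, (u'' x - f x) ^ 2) + v''.tvNorm) →
        u' =ᵐ[volume.restrict Ω] u) := by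
  classical
  set μ : Measure (Euc d) := volume.restrict Ω with hμdef
  haveI hfin : IsFiniteMeasure μ :=
    ⟨by rw [hμdef, Measure.restrict_apply_univ]; exact hΩb.measure_lt_top⟩
  set F : Lp ℝ 2 μ := hf.toLp f with hFdef
  set cost : (Euc d → ℝ) → VRadon d Ω → ℝ :=
    fun u v => lam / 2 * (∫ x, (u x - f x) ^ 2 ∂μ) + v.tvNorm with hcost
  -- basic facts
  have hlapl_mem : ∀ φ : Euc d → ℝ, ContDiff ℝ 2 φ → MemLp (lapl d φ) 2 μ := by
    intro φ hφ
    obtain ⟨C, hC0, hC⟩ := bounded_on_closure hΩb (cont_lapl hφ)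
    refine MemLp.of_bound (cont_lapl hφ).aestronglyMeasurable C ?_
    rw [hμdef]
    exact (ae_restrict_iff' hΩo.measurableSet).2 (Eventually.of_forall hC)
  have hD : ∀ (u : Euc d → ℝ) (hu : MemLp u 2 μ),
      (∫ x, (u x - f x) ^ 2 ∂μ) = ‖hu.toLp u - F‖ ^ 2 :=
    fun u hu => integral_sub_sq_eq hu hf
  have hcost_nonneg : ∀ (u : Euc d → ℝ) (v : VRadon d Ω), 0 ≤ cost u v := by
    intro u v
    rw [hcost]
    have h1 : 0 ≤ ∫ x, (u x - f x) ^ 2 ∂μ := integral_nonneg fun x => sq_nonneg _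
    have := v.tvNorm_nonneg
    positivity
  -- the midpoint construction
  have hmid : ∀ (u1 : Euc d → ℝ) (v1 : VRadon d Ω) (u2 : Euc d → ℝ) (v2 : VRadon d Ω)
      (h1 : MemLp u1 2 μ) (h2 : MemLp u2 2 μ),
      Admissible d Ω ν u1 v1 → Admissible d Ω ν u2 v2 →
      ∃ w vw, (MemLp w 2 μ ∧ Admissible d Ω ν w vw) ∧
        cost w vw ≤ (cost u1 v1 + cost u2 v2) / 2
          - lam / 8 * ‖h1.toLp u1 - h2.toLp u2‖ ^ 2 := by
    intro u1 v1 u2 v2 h1 h2 ha1 ha2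
    set w : Euc d → ℝ := (2⁻¹ : ℝ) • u1 + (2⁻¹ : ℝ) • u2 with hw
    have hwm : MemLp w 2 μ := (h1.const_smul (2⁻¹ : ℝ)).add (h2.const_smul (2⁻¹ : ℝ))
    have hwt : hwm.toLp w = (2⁻¹ : ℝ) • h1.toLp u1 + (2⁻¹ : ℝ) • h2.toLp u2 := by
      rw [← MemLp.toLp_const_smul (2⁻¹ : ℝ) h1, ← MemLp.toLp_const_smul (2⁻¹ : ℝ) h2,
        ← MemLp.toLp_add]
    set vw : VRadon d Ω :=
      { pair := fun g => (v1.pair g + v2.pair g) / 2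
        pair_add := fun a b => by show (v1.pair (a + b) + v2.pair (a + b)) / 2 = _; rw [v1.pair_add, v2.pair_add]; ring
        pair_smul := fun c a => by show (v1.pair (c • a) + v2.pair (c • a)) / 2 = _; rw [v1.pair_smul, v2.pair_smul]; ring
        bdd := ⟨(v1.tvNorm + v2.tvNorm) / 2, by
          rintro r ⟨φ, hc, hb, rfl⟩
          have b1 := v1.pair_le_tv hc hb
          have b2 := v2.pair_le_tv hc hb
          linarith⟩ } with hvw
    have hvwtv : vw.tvNorm ≤ (v1.tvNorm + v2.tvNorm) / 2 := by
      refine Real.sSup_le ?_ (by linarith [v1.tvNorm_nonneg, v2.tvNorm_nonneg])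
      rintro r ⟨φ, hc, hb, rfl⟩
      have b1 := v1.pair_le_tv hc hb
      have b2 := v2.pair_le_tv hc hb
      show (v1.pair φ + v2.pair φ) / 2 ≤ _
      linarith
    have hadm : Admissible d Ω ν w vw := by
      intro φ hφ hbc
      have e1 := ha1 φ hφ hbc
      have e2 := ha2 φ hφ hbc
      have hlm := hlapl_mem φ hφ
      have hi1 : Integrable (fun x => lapl d φ x * u1 x) μ := integrable_mul_L2 hlm h1
      have hi2 : Integrable (fun x => lapl d φ x * u2 x) μ := integrable_mul_L2 hlm h2
      have hieq : (∫ x in Ω, lapl d φ x * w x) =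
          2⁻¹ * (∫ x, lapl d φ x * u1 x ∂μ) + 2⁻¹ * (∫ x, lapl d φ x * u2 x ∂μ) := by
        have hfun : (fun x => lapl d φ x * w x) =
            fun x => 2⁻¹ * (lapl d φ x * u1 x) + 2⁻¹ * (lapl d φ x * u2 x) := by
          funext x
          simp only [hw, Pi.add_apply, Pi.smul_apply, smul_eq_mul]
          ring
        show (∫ x, lapl d φ x * w x ∂μ) = _
        rw [hfun, integral_add (hi1.const_mul _) (hi2.const_mul _),
          integral_const_mul, integral_const_mul]
      have hpw : vw.pair (fun x => gradient φ x) =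
          (v1.pair (fun x => gradient φ x) + v2.pair (fun x => gradient φ x)) / 2 := rfl
      have hμeq : (∫ x in Ω, lapl d φ x * u1 x) = ∫ x, lapl d φ x * u1 x ∂μ := rfl
      have hμeq2 : (∫ x in Ω, lapl d φ x * u2 x) = ∫ x, lapl d φ x * u2 x ∂μ := rfl
      rw [hieq, hpw]
      rw [hμeq] at e1
      rw [hμeq2] at e2
      linarith
    refine ⟨w, vw, ⟨hwm, hadm⟩, ?_⟩
    have hDw := hD w hwm
    have hD1 := hD u1 h1
    have hD2 := hD u2 h2
    have hnorm : ‖hwm.toLp w - F‖ ^ 2 =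
        (‖h1.toLp u1 - F‖ ^ 2 + ‖h2.toLp u2 - F‖ ^ 2) / 2
          - ‖h1.toLp u1 - h2.toLp u2‖ ^ 2 / 4 := by
      have hsplit : hwm.toLp w - F
          = (2⁻¹ : ℝ) • (h1.toLp u1 - F) + (2⁻¹ : ℝ) • (h2.toLp u2 - F) := by
        rw [hwt]
        module
      rw [hsplit, midpoint_norm_sq]
      have : h1.toLp u1 - F - (h2.toLp u2 - F) = h1.toLp u1 - h2.toLp u2 := by abel
      rw [this]
    have htv' : vw.tvNorm ≤ (v1.tvNorm + v2.tvNorm) / 2 := hvwtv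
    rw [hcost]
    simp only []
    rw [hDw, hD1, hD2, hnorm]
    ring_nf
    nlinarith [htv', hlam]
  -- the infimum
  set S : Set ℝ := {r | ∃ u v, (MemLp u 2 μ ∧ Admissible d Ω ν u v) ∧ r = cost u v}
    with hSdef
  obtain ⟨u₀, v₀, hu₀, ha₀⟩ := hfeas
  have hSne : S.Nonempty := ⟨cost u₀ v₀, u₀, v₀, ⟨hu₀, ha₀⟩, rfl⟩
  have hbdd : BddBelow S := ⟨0, by rintro r ⟨u, v, _, rfl⟩; exact hcost_nonneg u v⟩
  set m : ℝ := sInf S with hm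
  have hmle : ∀ (u : Euc d → ℝ) (v : VRadon d Ω), MemLp u 2 μ → Admissible d Ω ν u v →
      m ≤ cost u v := fun u v hu ha => csInf_le hbdd ⟨u, v, ⟨hu, ha⟩, rfl⟩
  have hex : ∀ n : ℕ, ∃ (u : Euc d → ℝ) (v : VRadon d Ω),
      (MemLp u 2 μ ∧ Admissible d Ω ν u v) ∧ cost u v < m + 1 / (n + 1) := by
    intro n
    obtain ⟨r, hrS, hrlt⟩ := Real.lt_sInf_add_pos hSne
      (by positivity : (0:ℝ) < 1 / (n + 1))
    obtain ⟨u, v, hfv, rfl⟩ := hrS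
    exact ⟨u, v, hfv, hrlt⟩
  choose uu vv hfeas2 hcostn using hex
  set U : ℕ → Lp ℝ 2 μ := fun n => (hfeas2 n).1.toLp (uu n) with hU
  -- Cauchy
  have hkey : ∀ n k : ℕ, ‖U n - U k‖ ^ 2 ≤ 4 / lam * (1 / (n + 1) + 1 / (k + 1)) := by
    intro n k
    obtain ⟨w, vw, ⟨hwm, hadm⟩, hle⟩ := hmid (uu n) (vv n) (uu k) (vv k)
      (hfeas2 n).1 (hfeas2 k).1 (hfeas2 n).2 (hfeas2 k).2
    have h0 := hmle w vw hwm hadm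
    have h1 := hcostn n
    have h2 := hcostn k
    have hle' : cost w vw ≤ (cost (uu n) (vv n) + cost (uu k) (vv k)) / 2
        - lam / 8 * ‖U n - U k‖ ^ 2 := hle
    have h3 : lam / 8 * ‖U n - U k‖ ^ 2 ≤ (1 / (n + 1) + 1 / (k + 1)) / 2 := by
      clear_value cost m U
      linarith
    calc ‖U n - U k‖ ^ 2 = 8 / lam * (lam / 8 * ‖U n - U k‖ ^ 2) := by
          field_simp
      _ ≤ 8 / lam * ((1 / (n + 1) + 1 / (k + 1)) / 2) :=
          mul_le_mul_of_nonneg_left h3 (by positivity)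
      _ = 4 / lam * (1 / (n + 1) + 1 / (k + 1)) := by ring
  have hcauchy : CauchySeq U := by
    refine cauchySeq_of_le_tendsto_0 (fun N => Real.sqrt (8 / lam * (1 / (N + 1))))
      (fun n k N hn hk => ?_) ?_
    · rw [dist_eq_norm]
      have hmono : ∀ {a : ℕ}, N ≤ a → 1 / ((a : ℝ) + 1) ≤ 1 / ((N : ℝ) + 1) := by
        intro a ha
        apply one_div_le_one_div_of_le (by positivity)
        have : (N : ℝ) ≤ a := Nat.cast_le.2 ha
        linarith
      have hX : ‖U n - U k‖ ^ 2 ≤ 8 / lam * (1 / (N + 1)) := by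
        refine (hkey n k).trans ?_
        have e1 := hmono hn
        have e2 := hmono hk
        have h4 : (0:ℝ) ≤ 4 / lam := by positivity
        calc 4 / lam * (1 / (n + 1) + 1 / (k + 1))
            ≤ 4 / lam * (1 / (N + 1) + 1 / (N + 1)) := by
              apply mul_le_mul_of_nonneg_left _ h4
              linarith
          _ = 8 / lam * (1 / (N + 1)) := by ring
      calc ‖U n - U k‖ = Real.sqrt (‖U n - U k‖ ^ 2) :=
            (Real.sqrt_sq (norm_nonneg _)).symm
        _ ≤ Real.sqrt (8 / lam * (1 / (N + 1))) := Real.sqrt_le_sqrt hX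
    · have h1 : Tendsto (fun N : ℕ => 8 / lam * (1 / ((N : ℝ) + 1))) atTop (nhds 0) := by
        have h2 := tendsto_one_div_add_atTop_nhds_zero_nat (𝕜 := ℝ)
        simpa using h2.const_mul (8 / lam)
      simpa [Real.sqrt_zero] using Filter.Tendsto.sqrt h1
  obtain ⟨Ustar, hUlim⟩ := cauchySeq_tendsto_of_complete hcauchy
  set ustar : Euc d → ℝ := ⇑Ustar with hustardef
  have hustar : MemLp ustar 2 μ := Lp.memLp Ustar
  have htoLp : hustar.toLp ustar = Ustar := Lp.toLp_coeFn Ustar hustar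
  set Dn : ℕ → ℝ := fun n => ‖U n - F‖ ^ 2 with hDn
  set Dstar : ℝ := ‖Ustar - F‖ ^ 2 with hDstar
  have hDlim : Tendsto Dn atTop (nhds Dstar) :=
    ((hUlim.sub tendsto_const_nhds).norm).pow 2
  have hεlim : Tendsto (fun n : ℕ => 1 / ((n : ℝ) + 1)) atTop (nhds 0) :=
    tendsto_one_div_add_atTop_nhds_zero_nat
  set Cstar : ℝ := m - lam / 2 * Dstar with hCstar
  have hClam : Tendsto (fun n => m + 1 / (n + 1) - lam / 2 * Dn n) atTop (nhds Cstar) := by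
    have := ((tendsto_const_nhds (x := m)).add hεlim).sub (hDlim.const_mul (lam / 2))
    simpa [hCstar, mul_comm] using this
  have hDeqn : ∀ n, (∫ x, (uu n x - f x) ^ 2 ∂μ) = Dn n :=
    fun n => hD (uu n) (hfeas2 n).1
  have htvb : ∀ n, (vv n).tvNorm ≤ m + 1 / (n + 1) - lam / 2 * Dn n := by
    intro n
    have h1 := hcostn n
    rw [hcost] at h1
    simp only [] at h1
    rw [hDeqn n] at h1
    linarith
  have hCstar0 : 0 ≤ Cstar := by
    refine ge_of_tendsto' hClam fun n => ?_
    have := (vv n).tvNorm_nonneg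
    linarith [htvb n]
  -- limit of constraint integrals
  have hIlim : ∀ (φ : Euc d → ℝ), ContDiff ℝ 2 φ →
      Tendsto (fun n => ∫ x, lapl d φ x * uu n x ∂μ) atTop
        (nhds (∫ x, lapl d φ x * ustar x ∂μ)) := by
    intro φ hφ
    have hlm := hlapl_mem φ hφ
    have heq : ∀ n, (∫ x, lapl d φ x * uu n x ∂μ) = ⟪hlm.toLp (lapl d φ), U n⟫ :=
      fun n => integral_mul_eq_inner hlm (hfeas2 n).1
    have heq2 : (∫ x, lapl d φ x * ustar x ∂μ) = ⟪hlm.toLp (lapl d φ), Ustar⟫ := by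
      rw [integral_mul_eq_inner hlm hustar, htoLp]
    rw [heq2]
    have := Filter.Tendsto.inner (𝕜 := ℝ) (tendsto_const_nhds (x := hlm.toLp (lapl d φ))) hUlim
    refine this.congr fun n => (heq n).symm
  -- domination
  have hdom : ∀ φ : Euc d → ℝ, ContDiff ℝ 2 φ →
      (∀ x ∈ frontier Ω, ⟪gradient φ x, ν x⟫ = 0) →
      -(∫ x, lapl d φ x * ustar x ∂μ) ≤ Cstar * SOm Ω (fun x => gradient φ x) := by
    intro φ hφ hbc
    obtain ⟨C, hC0, hC⟩ := bounded_on_closure hΩb (cont_grad hφ)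
    have hs0 : 0 ≤ SOm Ω (fun x => gradient φ x) := SOm_nonneg _ _
    have hn : ∀ n, -(∫ x, lapl d φ x * uu n x ∂μ) ≤
        (m + 1 / (n + 1) - lam / 2 * Dn n) * SOm Ω (fun x => gradient φ x) := by
      intro n
      have he := (hfeas2 n).2 φ hφ hbc
      have hμeq : (∫ x in Ω, lapl d φ x * uu n x) = ∫ x, lapl d φ x * uu n x ∂μ := rfl
      rw [hμeq] at he
      have hple := (vv n).pair_le (cont_grad hφ) hs0 fun x hx => le_SOm hC hx
      have hpairval : (vv n).pair (fun x => gradient φ x)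
          = -(∫ x, lapl d φ x * uu n x ∂μ) := by linarith
      rw [hpairval] at hple
      exact hple.trans (mul_le_mul_of_nonneg_right (htvb n) hs0)
    exact le_of_tendsto_of_tendsto' ((hIlim φ hφ).neg)
      (hClam.mul_const (SOm Ω (fun x => gradient φ x))) hn
  -- construct the limit vector measure via Hahn-Banach
  set T : Submodule ℝ (Euc d → ℝ) := Tsub d Ω ν with hT
  have hTmem : ∀ φ : T, ContDiff ℝ 2 (φ : Euc d → ℝ) ∧
      ∀ x ∈ frontier Ω, ⟪gradient (φ : Euc d → ℝ) x, ν x⟫ = 0 := fun φ => φ.2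
  have hgradB : ∀ φ : T, (fun x => gradient (φ : Euc d → ℝ) x) ∈ Bsub d Ω := by
    intro φ
    obtain ⟨C, hC0, hC⟩ := bounded_on_closure hΩb (cont_grad (hTmem φ).1)
    exact ⟨C, hC⟩
  set A' : T →ₗ[ℝ] ↥(Bsub d Ω) :=
    { toFun := fun φ => ⟨fun x => gradient (φ : Euc d → ℝ) x, hgradB φ⟩
      map_add' := by
        intro a b
        refine Subtype.ext (funext fun x => ?_)
        simp only [Submodule.coe_add, Submodule.coe_smul]
        rw [grad_add ((hTmem a).1.differentiable two_ne_zero).differentiableAt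
          ((hTmem b).1.differentiable two_ne_zero).differentiableAt]
        rfl
      map_smul' := by
        intro c a
        refine Subtype.ext (funext fun x => ?_)
        simp only [Submodule.coe_smul, RingHom.id_apply]
        rw [grad_smul c ((hTmem a).1.differentiable two_ne_zero).differentiableAt]
        rfl } with hA'
  set I : T →ₗ[ℝ] ℝ :=
    { toFun := fun φ => -(∫ x, lapl d (φ : Euc d → ℝ) x * ustar x ∂μ)
      map_add' := by
        intro a b
        have hi1 : Integrable (fun x => lapl d (a : Euc d → ℝ) x * ustar x) μ :=
          integrable_mul_L2 (hlapl_mem _ (hTmem a).1) hustar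
        have hi2 : Integrable (fun x => lapl d (b : Euc d → ℝ) x * ustar x) μ :=
          integrable_mul_L2 (hlapl_mem _ (hTmem b).1) hustar
        have hfun : (fun x => lapl d ((a : Euc d → ℝ) + (b : Euc d → ℝ)) x * ustar x) =
            fun x => lapl d (a : Euc d → ℝ) x * ustar x
              + lapl d (b : Euc d → ℝ) x * ustar x := by
          funext x
          rw [lapl_add (hTmem a).1 (hTmem b).1]
          ring
        rw [show ((a + b : T) : Euc d → ℝ) = (a : Euc d → ℝ) + (b : Euc d → ℝ) from rfl]
        rw [hfun, integral_add hi1 hi2]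
        ring
      map_smul' := by
        intro c a
        simp only [RingHom.id_apply]
        have hfun : (fun x => lapl d (c • (a : Euc d → ℝ)) x * ustar x) =
            fun x => c * (lapl d (a : Euc d → ℝ) x * ustar x) := by
          funext x
          rw [lapl_smul c (hTmem a).1]
          ring
        rw [show ((c • a : T) : Euc d → ℝ) = c • (a : Euc d → ℝ) from rfl]
        rw [hfun, integral_const_mul, smul_eq_mul]
        ring } with hI
  have hker : LinearMap.ker A' ≤ LinearMap.ker I := by
    intro φ hφk
    rw [LinearMap.mem_ker] at hφk ⊢
    have h0 : ∀ x, gradient (φ : Euc d → ℝ) x = 0 := by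
      intro x
      have := congrArg Subtype.val hφk
      exact congrFun this x
    have hfd : ∀ y, fderiv ℝ (φ : Euc d → ℝ) y = 0 :=
      fun y => gradient_eq_zero_iff.mp (h0 y)
    show -(∫ x, lapl d (φ : Euc d → ℝ) x * ustar x ∂μ) = 0
    have : (fun x => lapl d (φ : Euc d → ℝ) x * ustar x) = fun _ => (0:ℝ) := by
      funext x
      rw [lapl_eq_zero hfd]
      ring
    rw [this]
    simp
  set L : ↥(LinearMap.range A') →ₗ[ℝ] ℝ :=
    (Submodule.liftQ (LinearMap.ker A') I hker).comp
      (LinearMap.quotKerEquivRange A').symm.toLinearMap with hLdef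
  have hL : ∀ (φ : T) (hmem : A' φ ∈ LinearMap.range A'), L ⟨A' φ, hmem⟩ = I φ := by
    intro φ hmem
    rw [hLdef]
    simp only [LinearMap.comp_apply, LinearEquiv.coe_toLinearMap]
    rw [LinearMap.quotKerEquivRange_symm_apply_image]
    rw [Submodule.mkQ_apply, Submodule.liftQ_apply]
  obtain ⟨Lb, hLb1, hLb2⟩ := exists_extension_of_le_sublinear
    ⟨LinearMap.range A', L⟩ (fun g : ↥(Bsub d Ω) => Cstar * SOm Ω ↑g)
    (by
      intro c hc x
      show Cstar * SOm Ω ↑(c • x) = c * (Cstar * SOm Ω ↑x)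
      rw [show ((c • x : ↥(Bsub d Ω)) : Euc d → Euc d) = c • (x : Euc d → Euc d) from rfl,
        SOm_smul hc x.2]
      ring)
    (by
      intro x y
      show Cstar * SOm Ω ↑(x + y) ≤ Cstar * SOm Ω ↑x + Cstar * SOm Ω ↑y
      rw [show ((x + y : ↥(Bsub d Ω)) : Euc d → Euc d)
        = (x : Euc d → Euc d) + (y : Euc d → Euc d) from rfl]
      calc Cstar * SOm Ω ((x : Euc d → Euc d) + (y : Euc d → Euc d))
          ≤ Cstar * (SOm Ω (x : Euc d → Euc d) + SOm Ω (y : Euc d → Euc d)) :=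
            mul_le_mul_of_nonneg_left (SOm_add x.2 y.2) hCstar0
        _ = _ := by ring)
    (by
      rintro ⟨x, hx⟩
      obtain ⟨φ, hφ⟩ := hx
      have hxeq : (⟨A' φ, ⟨φ, rfl⟩⟩ : ↥(LinearMap.range A')) = ⟨x, ⟨φ, hφ⟩⟩ :=
        Subtype.ext hφ
      show L ⟨x, _⟩ ≤ Cstar * SOm Ω x
      rw [← hxeq, hL φ ⟨φ, rfl⟩]
      have := hdom (φ : Euc d → ℝ) (hTmem φ).1 (hTmem φ).2
      calc I φ = -(∫ x, lapl d (φ : Euc d → ℝ) x * ustar x ∂μ) := rfl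
        _ ≤ Cstar * SOm Ω (fun x => gradient (φ : Euc d → ℝ) x) := this
        _ = Cstar * SOm Ω x := by rw [← hφ]; rfl)
  have hLb1' : ∀ (x : ↥(Bsub d Ω)) (hx : x ∈ LinearMap.range A'), Lb x = L ⟨x, hx⟩ := by
    intro x hx
    have h := hLb1 ⟨x, hx⟩
    rw [LinearPMap.mk_apply] at h
    exact h
  obtain ⟨gext, hgext⟩ := LinearMap.exists_extend Lb
  have hgB : ∀ b : ↥(Bsub d Ω), gext ↑b = Lb b := fun b => LinearMap.congr_fun hgext b
  set vstar : VRadon d Ω :=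
    { pair := fun g => gext g
      pair_add := fun a b => map_add gext a b
      pair_smul := fun c a => by show gext (c • a) = c * gext a; rw [_root_.map_smul]; rfl
      bdd := ⟨Cstar, by
        rintro r ⟨φ, hc, hb, rfl⟩
        show gext φ ≤ Cstar
        have hφB : φ ∈ Bsub d Ω := ⟨1, hb⟩
        calc gext φ = Lb ⟨φ, hφB⟩ := by exact hgB ⟨φ, hφB⟩
          _ ≤ Cstar * SOm Ω φ := hLb2 _
          _ ≤ Cstar * 1 := mul_le_mul_of_nonneg_left (SOm_le hb zero_le_one) hCstar0
          _ = Cstar := mul_one _⟩ } with hvstar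
  have htvstar : vstar.tvNorm ≤ Cstar := by
    refine Real.sSup_le ?_ hCstar0
    rintro r ⟨φ, hc, hb, rfl⟩
    show gext φ ≤ Cstar
    have hφB : φ ∈ Bsub d Ω := ⟨1, hb⟩
    calc gext φ = Lb ⟨φ, hφB⟩ := by exact hgB ⟨φ, hφB⟩
      _ ≤ Cstar * SOm Ω φ := hLb2 _
      _ ≤ Cstar * 1 := mul_le_mul_of_nonneg_left (SOm_le hb zero_le_one) hCstar0
      _ = Cstar := mul_one _
  have hadmstar : Admissible d Ω ν ustar vstar := by
    intro φ hφ hbc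
    set φT : T := ⟨φ, hφ, hbc⟩ with hφT
    have h1 : vstar.pair (fun x => gradient φ x) = gext ↑(A' φT) := rfl
    have h2 : Lb (A' φT) = L ⟨A' φT, ⟨φT, rfl⟩⟩ := hLb1' (A' φT) ⟨φT, rfl⟩
    have h3 : (∫ x in Ω, lapl d φ x * ustar x) = ∫ x, lapl d φ x * ustar x ∂μ := rfl
    rw [h3, h1, hgB (A' φT), h2, hL φT ⟨φT, rfl⟩]
    show (∫ x, lapl d φ x * ustar x ∂μ)
      + (-(∫ x, lapl d (φT : Euc d → ℝ) x * ustar x ∂μ)) = 0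
    rw [show ((φT : Euc d → ℝ)) = φ from rfl]
    ring
  -- minimality
  have hcoststar : cost ustar vstar ≤ m := by
    rw [hcost]
    simp only []
    rw [hD ustar hustar, htoLp, ← hDstar]
    rw [hCstar] at htvstar
    clear_value Dstar m
    linarith [htvstar]
  refine ⟨ustar, vstar, hustar, hadmstar, ?_, ?_⟩
  · intro u' v' hu' ha'
    have h1 : m ≤ cost u' v' := hmle u' v' hu' ha'
    have h2 : cost ustar vstar ≤ cost u' v' := hcoststar.trans h1
    rw [hcost] at h2
    exact h2
  · intro u' v' hu' ha' hopt
    have h1 : cost u' v' ≤ cost ustar vstar := by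
      have := hopt ustar vstar hustar hadmstar
      rw [hcost]
      exact this
    have h2 : m ≤ cost u' v' := hmle u' v' hu' ha'
    obtain ⟨w, vw, ⟨hwm, hadm⟩, hle⟩ := hmid ustar vstar u' v' hustar hu' hadmstar ha'
    have h4 : m ≤ cost w vw := hmle w vw hwm hadm
    have h5 : lam / 8 * ‖hustar.toLp ustar - hu'.toLp u'‖ ^ 2 ≤ 0 := by
      clear_value cost m
      linarith
    have h6 : ‖hustar.toLp ustar - hu'.toLp u'‖ = 0 := by
      have hX0 : (0:ℝ) ≤ ‖hustar.toLp ustar - hu'.toLp u'‖ ^ 2 := sq_nonneg _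
      have hXle : ‖hustar.toLp ustar - hu'.toLp u'‖ ^ 2 ≤ 0 := by nlinarith
      have : ‖hustar.toLp ustar - hu'.toLp u'‖ ^ 2 = 0 := le_antisymm hXle hX0
      exact pow_eq_zero_iff (by norm_num) |>.mp this
    have h7 : hu'.toLp u' = Ustar := by
      have := sub_eq_zero.mp (norm_eq_zero.mp h6)
      rw [htoLp] at this
      exact this.symm
    have h8 := hu'.coeFn_toLp
    rw [h7] at h8
    exact h8.symm
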